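/- Let δ, μ₁, μ₂, β > 0, p > 1, and (w₁, w₂) a positive bounded C² solution on ℝ of the coupled system w₁'' - δ²w₁ + μ₁w₁^{2p-1} + βw₁^{p-1}w₂^p = 0, w₂'' - δ²w₂ + μ₂w₂^{2p-1} + βw₂^{p-1}w₁^p = 0 with constant energy Ψ ≡ K ≥ 0, and assume w₁(t) < (pδ²/μ₁)^{1/(2p-2)} and w₂(t) < (pδ²/μ₂)^{1/(2p-2)} for all t. Then, with fᵢ(t) = -½wᵢ'(t)² + (δ²/2)wᵢ(t)² - (μᵢ/(2p))wᵢ(t)^{2p}, one has f₁(t) > 0 and f₂(t) > 0 for all t ∈ ℝ; in particular |wᵢ'(t)| < δ wᵢ(t) for all t and i = 1,2. -/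

import Mathlib

open Real Set Filter

lemma gpos_aux (δ μ p x : ℝ) (hδ : 0 < δ) (hμ : 0 < μ) (hp : 1 < p)
    (hx0 : 0 < x) (hx : x < (p * δ^2 / μ) ^ (1/(2*p - 2))) :
    (μ/(2*p)) * x ^ (2*p) < (δ^2/2) * x^2 := by
  have h2p2 : 0 < 2*p - 2 := by linarith
  have hc : (0:ℝ) < p * δ^2 / μ := by positivity
  have hxe : x ^ (2*p - 2) < p * δ^2 / μ := by
    calc x ^ (2*p-2) < ((p*δ^2/μ)^(1/(2*p-2)))^(2*p-2) :=
          Real.rpow_lt_rpow hx0.le hx h2p2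
    _ = p*δ^2/μ := by
          rw [← Real.rpow_mul hc.le, one_div, inv_mul_cancel₀ h2p2.ne', Real.rpow_one]
  have hsplit : x ^ (2*p) = x^2 * x ^ (2*p - 2) := by
    rw [← Real.rpow_natCast x 2, ← Real.rpow_add hx0]
    norm_num
  rw [hsplit]
  have hx2 : (0:ℝ) < x^2 := by positivity
  have h1 : (μ/(2*p)) * x ^ (2*p-2) < δ^2/2 := by
    have := (mul_lt_mul_of_pos_left hxe (by positivity : (0:ℝ) < μ/(2*p)))
    calc (μ/(2*p)) * x ^ (2*p-2) < (μ/(2*p)) * (p*δ^2/μ) := this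
    _ = δ^2/2 := by field_simp
  nlinarith [Real.rpow_pos_of_pos hx0 (2*p-2)]

lemma key_aux (δ μ β p : ℝ) (hδ : 0 < δ) (hμ : 0 < μ) (hβ : 0 < β) (hp : 1 < p)
    (w v : ℝ → ℝ) (hw : ContDiff ℝ 2 w)
    (hposw : ∀ t, 0 < w t) (hposv : ∀ t, 0 < v t)
    (hode : ∀ t, deriv (deriv w) t - δ^2 * w t + μ * w t ^ (2*p - 1)
      + β * w t ^ (p - 1) * v t ^ p = 0)
    (hless : ∀ t, w t < (p * δ^2 / μ) ^ (1/(2*p - 2)))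
    (t₀ : ℝ)
    (hf0 : -(1/2) * (deriv w t₀)^2 + (δ^2/2) * (w t₀)^2 - (μ/(2*p)) * w t₀ ^ (2*p) ≤ 0)
    (hd0 : 0 < deriv w t₀) : False := by
  set f : ℝ → ℝ :=
    fun t => -(1/2) * (deriv w t)^2 + (δ^2/2) * (w t)^2 - (μ/(2*p)) * w t ^ (2*p) with hfdef
  have hwd : Differentiable ℝ w := hw.differentiable (by norm_num)
  have hw1 : ContDiff ℝ 1 (deriv w) := by
    have h2 : ContDiff ℝ (1+1) w := by norm_num at hw ⊢; exact hw
    exact (contDiff_succ_iff_deriv.mp h2).2.2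
  have hw'd : Differentiable ℝ (deriv w) := hw1.differentiable one_ne_zero
  have hw'c : Continuous (deriv w) := hw'd.continuous
  have hfd : ∀ t, HasDerivAt f (deriv w t * (β * w t ^ (p-1) * v t ^ p)) t := by
    intro t
    have h1 : HasDerivAt w (deriv w t) t := (hwd t).hasDerivAt
    have h2 : HasDerivAt (deriv w) (deriv (deriv w) t) t := (hw'd t).hasDerivAt
    have h3 : HasDerivAt (fun s => w s ^ (2*p)) (deriv w t * (2*p) * w t ^ (2*p - 1)) t :=
      h1.rpow_const (Or.inl (hposw t).ne')
    have h4 := (((h2.pow 2).const_mul (-(1/2 : ℝ))).add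
      ((h1.pow 2).const_mul (δ^2/2))).sub (h3.const_mul (μ/(2*p)))
    have hode' : deriv (deriv w) t
        = δ^2*w t - μ*w t^(2*p-1) - β*w t^(p-1)*v t^p := by linarith [hode t]
    have hp0 : p ≠ 0 := by linarith
    refine h4.congr_deriv ?_
    rw [hode']
    field_simp
    ring
  have hfdiff : Differentiable ℝ f := fun t => (hfd t).differentiableAt
  have hfc : Continuous f := hfdiff.continuous
  have hderivf : ∀ t, deriv f t = deriv w t * (β * w t ^ (p-1) * v t ^ p) :=
    fun t => (hfd t).deriv
  have hg : ∀ t, (μ/(2*p)) * w t ^ (2*p) < (δ^2/2) * (w t)^2 :=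
    fun t => gpos_aux δ μ p (w t) hδ hμ hp (hposw t) (hless t)
  -- step: deriv w > 0 on Iic t₀
  have hpos' : ∀ t ≤ t₀, 0 < deriv w t := by
    by_contra hcon
    push_neg at hcon
    obtain ⟨t₁, ht₁, ht₁'⟩ := hcon
    set S := Icc t₁ t₀ ∩ {t | deriv w t ≤ 0} with hS
    have hSc : IsClosed S := isClosed_Icc.inter (isClosed_le hw'c continuous_const)
    have hSne : S.Nonempty := ⟨t₁, ⟨le_refl _, ht₁⟩, ht₁'⟩
    have hSbdd : BddAbove S := ⟨t₀, fun x hx => hx.1.2⟩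
    set t₂ := sSup S with ht₂def
    have ht₂S : t₂ ∈ S := hSc.csSup_mem hSne hSbdd
    have ht₂le : t₂ ≤ t₀ := ht₂S.1.2
    have ht₂d : deriv w t₂ ≤ 0 := ht₂S.2
    have ht₂lt : t₂ < t₀ := lt_of_le_of_ne ht₂le (by intro h; rw [h] at ht₂d; linarith)
    have hmid : ∀ s, t₂ < s → s ≤ t₀ → 0 < deriv w s := by
      intro s hs hs'
      by_contra h
      push_neg at h
      have hsS : s ∈ S := ⟨⟨le_trans ht₂S.1.1 hs.le, hs'⟩, h⟩
      exact absurd (le_csSup hSbdd hsS) (not_le.mpr hs)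
    have hmono : MonotoneOn f (Icc t₂ t₀) := by
      apply monotoneOn_of_deriv_nonneg (convex_Icc _ _) hfc.continuousOn
        hfdiff.differentiableOn
      intro x hx
      rw [interior_Icc] at hx
      rw [hderivf]
      have h1 := hmid x hx.1 hx.2.le
      have h2 : (0:ℝ) < β * w x ^ (p-1) * v x ^ p := by
        have := hposw x; have := hposv x; positivity
      positivity
    have hft₂ : f t₂ ≤ 0 :=
      le_trans (hmono ⟨le_refl _, ht₂le⟩ ⟨ht₂le, le_refl _⟩ ht₂le) hf0
    have hsq : 0 < (deriv w t₂)^2 := by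
      have := hg t₂
      simp only [hfdef] at hft₂
      nlinarith
    have hneg : deriv w t₂ < 0 := by
      rcases lt_or_eq_of_le ht₂d with h | h
      · exact h
      · rw [h] at hsq; norm_num at hsq
    obtain ⟨ε, hε, hball⟩ := Metric.isOpen_iff.mp
      (isOpen_lt hw'c continuous_const) t₂ hneg
    set s := min (t₂ + ε/2) ((t₂+t₀)/2) with hsdef
    have hs1 : t₂ < s := by
      apply lt_min <;> linarith
    have hs2 : s ≤ t₀ := le_trans (min_le_right _ _) (by linarith)
    have hs3 : s ∈ Metric.ball t₂ ε := by
      rw [Metric.mem_ball, Real.dist_eq, abs_lt]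
      constructor
      · have := min_le_left (t₂ + ε/2) ((t₂+t₀)/2); linarith [hs1]
      · have := min_le_left (t₂ + ε/2) ((t₂+t₀)/2); linarith
    have hlt := hball hs3
    simp only [mem_setOf_eq] at hlt
    have hgt := hmid s hs1 hs2
    linarith
  -- f monotone on Iic t₀, strict on [t₀-1, t₀]
  have hcoup : ∀ x, (0:ℝ) < β * w x ^ (p-1) * v x ^ p := by
    intro x; have := hposw x; have := hposv x; positivity
  have hmonoI : MonotoneOn f (Iic t₀) := by
    apply monotoneOn_of_deriv_nonneg (convex_Iic _) hfc.continuousOn hfdiff.differentiableOn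
    intro x hx
    rw [interior_Iic] at hx
    rw [hderivf]
    exact le_of_lt (mul_pos (hpos' x hx.le) (hcoup x))
  have hstrict : StrictMonoOn f (Icc (t₀-1) t₀) := by
    apply strictMonoOn_of_deriv_pos (convex_Icc _ _) hfc.continuousOn
    intro x hx
    rw [interior_Icc] at hx
    rw [hderivf]
    exact mul_pos (hpos' x hx.2.le) (hcoup x)
  set s₁ := t₀ - 1 with hs₁def
  have hfs₁ : f s₁ < 0 :=
    lt_of_lt_of_le (hstrict ⟨le_refl _, by linarith⟩ ⟨by linarith, le_refl _⟩ (by linarith)) hf0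
  -- w monotone on Iic t₀
  have hwmono : MonotoneOn w (Iic t₀) := by
    apply monotoneOn_of_deriv_nonneg (convex_Iic _) hwd.continuous.continuousOn
      hwd.differentiableOn
    intro x hx
    rw [interior_Iic] at hx
    exact (hpos' x hx.le).le
  set u : ℕ → ℝ := fun n => s₁ - n with hudef
  have huIic : ∀ n : ℕ, u n ∈ Iic t₀ := by
    intro n; simp only [hudef, mem_Iic, hs₁def]
    have : (0:ℝ) ≤ n := Nat.cast_nonneg n
    linarith
  have hanti : Antitone (fun n => w (u n)) := by
    intro m n hmn
    apply hwmono (huIic n) (huIic m)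
    simp only [hudef]
    have : (m:ℝ) ≤ n := Nat.cast_le.mpr hmn
    linarith
  have hbdd : BddBelow (Set.range fun n => w (u n)) := by
    refine ⟨0, ?_⟩
    rintro x ⟨n, rfl⟩
    exact (hposw _).le
  have hL := tendsto_atTop_ciInf hanti hbdd
  have hL1 : Tendsto (fun n => w (u (n+1))) atTop (nhds (⨅ n, w (u n))) :=
    hL.comp (tendsto_add_atTop_nat 1)
  have hdiff0 : Tendsto (fun n => w (u n) - w (u (n+1))) atTop (nhds 0) := by
    have := hL.sub hL1
    simpa using this
  have hξex : ∀ n : ℕ, ∃ c ∈ Ioo (u (n+1)) (u n),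
      deriv w c = (w (u n) - w (u (n+1))) / (u n - u (n+1)) := by
    intro n
    apply exists_deriv_eq_slope w ?_ hwd.continuous.continuousOn hwd.differentiableOn
    simp only [hudef]
    push_cast
    linarith
  choose ξ hξmem hξval using hξex
  have hu1 : ∀ n : ℕ, u n - u (n+1) = 1 := by
    intro n; simp only [hudef]; push_cast; ring
  have hξval' : ∀ n, deriv w (ξ n) = w (u n) - w (u (n+1)) := by
    intro n; rw [hξval n, hu1 n, div_one]
  have hξlim : Tendsto (fun n => deriv w (ξ n)) atTop (nhds 0) := by
    simp only [hξval']
    exact hdiff0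
  have hξle : ∀ n, ξ n ≤ s₁ := by
    intro n
    have h := (hξmem n).2
    have : u n ≤ s₁ := by
      simp only [hudef]
      have : (0:ℝ) ≤ n := Nat.cast_nonneg n
      linarith
    linarith
  have hlow : ∀ n, -2 * f s₁ ≤ (deriv w (ξ n))^2 := by
    intro n
    have hfle : f (ξ n) ≤ f s₁ := hmonoI (by simp only [mem_Iic]; linarith [hξle n])
      (by simp only [mem_Iic, hs₁def]; linarith) (hξle n)
    have hgn := hg (ξ n)
    simp only [hfdef] at hfle ⊢
    nlinarith
  have hc0 : (0:ℝ) < -2 * f s₁ := by linarith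
  have hsqlim : Tendsto (fun n => (deriv w (ξ n))^2) atTop (nhds 0) := by
    have := hξlim.pow 2
    simpa using this
  have hev := hsqlim.eventually_lt_const hc0
  obtain ⟨n, hn⟩ := hev.exists
  linarith [hlow n]

lemma key_aux' (δ μ β p : ℝ) (hδ : 0 < δ) (hμ : 0 < μ) (hβ : 0 < β) (hp : 1 < p)
    (w v : ℝ → ℝ) (hw : ContDiff ℝ 2 w)
    (hposw : ∀ t, 0 < w t) (hposv : ∀ t, 0 < v t)
    (hode : ∀ t, deriv (deriv w) t - δ^2 * w t + μ * w t ^ (2*p - 1)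
      + β * w t ^ (p - 1) * v t ^ p = 0)
    (hless : ∀ t, w t < (p * δ^2 / μ) ^ (1/(2*p - 2)))
    (t₀ : ℝ)
    (hf0 : -(1/2) * (deriv w t₀)^2 + (δ^2/2) * (w t₀)^2 - (μ/(2*p)) * w t₀ ^ (2*p) ≤ 0)
    (hd0 : deriv w t₀ < 0) : False := by
  set W : ℝ → ℝ := fun t => w (-t) with hWdef
  set V : ℝ → ℝ := fun t => v (-t) with hVdef
  have hW1 : deriv W = fun t => -deriv w (-t) := funext (fun t => deriv_comp_neg w t)
  have hW2 : ∀ t, deriv (deriv W) t = deriv (deriv w) (-t) := by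
    intro t
    rw [hW1]
    have : deriv (fun t => -deriv w (-t)) t = -deriv (fun t => deriv w (-t)) t := by
      exact deriv.neg
    rw [this, deriv_comp_neg (deriv w) t, neg_neg]
  apply key_aux δ μ β p hδ hμ hβ hp W V ?_ (fun t => hposw (-t)) (fun t => hposv (-t))
    ?_ (fun t => hless (-t)) (-t₀) ?_ ?_
  · exact hw.comp (contDiff_id.neg)
  · intro t
    rw [hW2 t]
    exact hode (-t)
  · rw [hW1]
    simpa [hWdef] using hf0
  · rw [hW1]
    simpa [hWdef] using hd0

lemma fpos_aux (δ μ β p : ℝ) (hδ : 0 < δ) (hμ : 0 < μ) (hβ : 0 < β) (hp : 1 < p)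
    (w v : ℝ → ℝ) (hw : ContDiff ℝ 2 w)
    (hposw : ∀ t, 0 < w t) (hposv : ∀ t, 0 < v t)
    (hode : ∀ t, deriv (deriv w) t - δ^2 * w t + μ * w t ^ (2*p - 1)
      + β * w t ^ (p - 1) * v t ^ p = 0)
    (hless : ∀ t, w t < (p * δ^2 / μ) ^ (1/(2*p - 2))) (t : ℝ) :
    0 < -(1/2) * (deriv w t)^2 + (δ^2/2) * (w t)^2 - (μ/(2*p)) * w t ^ (2*p) := by
  by_contra h
  push_neg at h
  rcases lt_trichotomy (deriv w t) 0 with hd | hd | hd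
  · exact key_aux' δ μ β p hδ hμ hβ hp w v hw hposw hposv hode hless t h hd
  · have := gpos_aux δ μ p (w t) hδ hμ hp (hposw t) (hless t)
    rw [hd] at h
    norm_num at h
    linarith
  · exact key_aux δ μ β p hδ hμ hβ hp w v hw hposw hposv hode hless t h hd

theorem stmt_4 (δ μ₁ μ₂ β p K : ℝ) (hδ : 0 < δ) (hμ₁ : 0 < μ₁) (hμ₂ : 0 < μ₂)
    (hβ : 0 < β) (hp : 1 < p) (hK : 0 ≤ K) (w₁ w₂ : ℝ → ℝ)
    (hw₁ : ContDiff ℝ 2 w₁) (hw₂ : ContDiff ℝ 2 w₂)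
    (hpos₁ : ∀ t, 0 < w₁ t) (hpos₂ : ∀ t, 0 < w₂ t)
    (hbd : ∃ M, ∀ t, w₁ t ≤ M ∧ w₂ t ≤ M)
    (heq₁ : ∀ t, deriv (deriv w₁) t - δ^2 * w₁ t + μ₁ * w₁ t ^ (2*p - 1)
      + β * w₁ t ^ (p - 1) * w₂ t ^ p = 0)
    (heq₂ : ∀ t, deriv (deriv w₂) t - δ^2 * w₂ t + μ₂ * w₂ t ^ (2*p - 1)
      + β * w₂ t ^ (p - 1) * w₁ t ^ p = 0)
    (hΨ : ∀ t, (1/2) * ((deriv w₁ t)^2 + (deriv w₂ t)^2 - δ^2 * (w₁ t)^2 - δ^2 * (w₂ t)^2)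
      + (1/(2*p)) * (μ₁ * w₁ t ^ (2*p) + 2*β * w₁ t ^ p * w₂ t ^ p + μ₂ * w₂ t ^ (2*p)) = K)
    (hless₁ : ∀ t, w₁ t < (p * δ^2 / μ₁) ^ (1/(2*p - 2)))
    (hless₂ : ∀ t, w₂ t < (p * δ^2 / μ₂) ^ (1/(2*p - 2))) :
    ∀ t : ℝ,
      0 < -(1/2) * (deriv w₁ t)^2 + (δ^2/2) * (w₁ t)^2 - (μ₁/(2*p)) * w₁ t ^ (2*p) ∧
      0 < -(1/2) * (deriv w₂ t)^2 + (δ^2/2) * (w₂ t)^2 - (μ₂/(2*p)) * w₂ t ^ (2*p) ∧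
      |deriv w₁ t| < δ * w₁ t ∧ |deriv w₂ t| < δ * w₂ t := by
  intro t
  have h1 := fpos_aux δ μ₁ β p hδ hμ₁ hβ hp w₁ w₂ hw₁ hpos₁ hpos₂ heq₁ hless₁ t
  have h2 := fpos_aux δ μ₂ β p hδ hμ₂ hβ hp w₂ w₁ hw₂ hpos₂ hpos₁ heq₂ hless₂ t
  refine ⟨h1, h2, ?_, ?_⟩
  · apply abs_lt_of_sq_lt_sq ?_ (mul_nonneg hδ.le (hpos₁ t).le)
    have hrp : (0:ℝ) < w₁ t ^ (2*p) := Real.rpow_pos_of_pos (hpos₁ t) _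
    nlinarith [mul_pos (show (0:ℝ) < μ₁/(2*p) by positivity) hrp]
  · apply abs_lt_of_sq_lt_sq ?_ (mul_nonneg hδ.le (hpos₂ t).le)
    have hrp : (0:ℝ) < w₂ t ^ (2*p) := Real.rpow_pos_of_pos (hpos₂ t) _
    nlinarith [mul_pos (show (0:ℝ) < μ₂/(2*p) by positivity) hrp]
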